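/- Let s₁, …, s_n be closed line segments in ℝ² and let W = {(a, b) ∈ ℝ² : for every i the line {(x, a*x + b) : x ∈ ℝ} meets sᵢ}. If W has at least n + 1 connected components (i.e., there exist n + 1 points of W lying pairwise in distinct connected components of W), then there exists x₀ ∈ ℝ such that the vertical line {(x₀, y) : y ∈ ℝ} meets every segment sᵢ. -/

import Mathlib

open Set

noncomputable section

/-- The line in ℝ² through `a` with direction `v`. -/
def lineThrough2 (a v : ℝ × ℝ) : Set (ℝ × ℝ) :=
  {p | ∃ r : ℝ, p = a + r • v}

/-- `L` is a line in ℝ². -/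
def IsLine2 (L : Set (ℝ × ℝ)) : Prop :=
  ∃ a v : ℝ × ℝ, v ≠ 0 ∧ L = lineThrough2 a v


lemma comb_iff (u v : ℝ) : (∃ t : ℝ, 0 ≤ t ∧ t ≤ 1 ∧ (1-t)*u + t*v = 0) ↔ u * v ≤ 0 := by
  constructor
  · rintro ⟨t, ht0, ht1, h⟩
    have h1 : t*(u*v) = -((1-t)*(u*u)) := by linear_combination u*h
    have h2 : (1-t)*(u*v) = -(t*(v*v)) := by linear_combination v*h
    nlinarith [mul_nonneg ht0 (mul_self_nonneg v),
      mul_nonneg (by linarith : (0:ℝ) ≤ 1-t) (mul_self_nonneg u)]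
  · intro h
    rcases lt_trichotomy u 0 with hu | hu | hu
    · have hv : 0 ≤ v := by nlinarith
      have h0 : u - v ≠ 0 := by intro h'; nlinarith
      have hlt : u - v < 0 := by linarith
      refine ⟨u/(u-v), ?_, ?_, by field_simp; ring⟩
      · exact div_nonneg_of_nonpos (le_of_lt hu) (le_of_lt hlt)
      · rw [div_le_one_iff]
        right; right; exact ⟨hlt, by linarith⟩
    · exact ⟨0, le_refl _, zero_le_one, by rw [hu]; ring⟩
    · have hv : v ≤ 0 := by nlinarith
      have h0 : u - v ≠ 0 := by intro h'; nlinarith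
      have hlt : 0 < u - v := by linarith
      refine ⟨u/(u-v), ?_, ?_, by field_simp; ring⟩
      · positivity
      · rw [div_le_one hlt]; linarith


lemma key_lemma (A B C D s : ℝ) (hAB : A*B ≤ 0) (hCD : C*D ≤ 0)
    (hphi : 0 ≤ (A-B)*(C-D)) (hs0 : 0 ≤ s) (hs1 : s ≤ 1) :
    ((1-s)*A + s*C) * ((1-s)*B + s*D) ≤ 0 := by
  have hs' : (0:ℝ) ≤ 1 - s := by linarith
  rcases mul_nonpos_iff.mp hAB with ⟨hA, hB⟩ | ⟨hA, hB⟩ <;>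
  rcases mul_nonpos_iff.mp hCD with ⟨hC, hD⟩ | ⟨hC, hD⟩
  · exact mul_nonpos_iff.mpr (Or.inl ⟨add_nonneg (mul_nonneg hs' hA) (mul_nonneg hs0 hC),
      add_nonpos (mul_nonpos_of_nonneg_of_nonpos hs' hB) (mul_nonpos_of_nonneg_of_nonpos hs0 hD)⟩)
  · have hz0 : (A-B)*(C-D) = 0 := le_antisymm
      (mul_nonpos_iff.mpr (Or.inl ⟨by linarith, by linarith⟩)) hphi
    rcases mul_eq_zero.mp hz0 with h | h
    · have : ((1-s)*A + s*C) * ((1-s)*B + s*D) = s^2*(C*D) := by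
        have hA0 : A = 0 := by linarith
        have hB0 : B = 0 := by linarith
        rw [hA0, hB0]; ring
      rw [this]; exact mul_nonpos_of_nonneg_of_nonpos (sq_nonneg s) hCD
    · have : ((1-s)*A + s*C) * ((1-s)*B + s*D) = (1-s)^2*(A*B) := by
        have hC0 : C = 0 := by linarith
        have hD0 : D = 0 := by linarith
        rw [hC0, hD0]; ring
      rw [this]; exact mul_nonpos_of_nonneg_of_nonpos (sq_nonneg (1-s)) hAB
  · have hz0 : (A-B)*(C-D) = 0 := le_antisymm
      (mul_nonpos_iff.mpr (Or.inr ⟨by linarith, by linarith⟩)) hphi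
    rcases mul_eq_zero.mp hz0 with h | h
    · have : ((1-s)*A + s*C) * ((1-s)*B + s*D) = s^2*(C*D) := by
        have hA0 : A = 0 := by linarith
        have hB0 : B = 0 := by linarith
        rw [hA0, hB0]; ring
      rw [this]; exact mul_nonpos_of_nonneg_of_nonpos (sq_nonneg s) hCD
    · have : ((1-s)*A + s*C) * ((1-s)*B + s*D) = (1-s)^2*(A*B) := by
        have hC0 : C = 0 := by linarith
        have hD0 : D = 0 := by linarith
        rw [hC0, hD0]; ring
      rw [this]; exact mul_nonpos_of_nonneg_of_nonpos (sq_nonneg (1-s)) hAB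
  · exact mul_nonpos_iff.mpr (Or.inr ⟨add_nonpos (mul_nonpos_of_nonneg_of_nonpos hs' hA)
      (mul_nonpos_of_nonneg_of_nonpos hs0 hC),
      add_nonneg (mul_nonneg hs' hB) (mul_nonneg hs0 hD)⟩)

private lemma aux_two (dy dx u₁ v₁ u₂ v₂ : ℝ) (hdx : 0 < dx) (h12 : v₁ ≤ u₂)
    (s1 : (dy - u₁*dx)*(dy - v₁*dx) < 0) (s2 : (dy - u₂*dx)*(dy - v₂*dx) < 0)
    (h1 : u₁ < v₁) (h2 : u₂ < v₂) : False := by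
  have hd1 : dy - v₁*dx < dy - u₁*dx := by nlinarith [mul_pos hdx (sub_pos.mpr h1)]
  have hv1 : dy - v₁*dx < 0 := by
    by_contra h'
    push_neg at h'
    nlinarith
  have hu2 : dy - u₂*dx < 0 := by nlinarith [mul_nonneg hdx.le (sub_nonneg.mpr h12)]
  have hv2 : dy - v₂*dx < 0 := by nlinarith [mul_pos hdx (sub_pos.mpr h2)]
  nlinarith

lemma no_two_sign_changes (dy dx u₁ v₁ u₂ v₂ : ℝ) (h12 : v₁ ≤ u₂)
    (s1 : (dy - u₁*dx)*(dy - v₁*dx) < 0) (s2 : (dy - u₂*dx)*(dy - v₂*dx) < 0)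
    (h1 : u₁ < v₁) (h2 : u₂ < v₂) : False := by
  rcases lt_trichotomy dx 0 with hdx | hdx | hdx
  · refine aux_two (-dy) (-dx) u₁ v₁ u₂ v₂ (by linarith) h12 ?_ ?_ h1 h2 <;> nlinarith
  · rw [hdx] at s1; nlinarith [sq_nonneg dy]
  · exact aux_two dy dx u₁ v₁ u₂ v₂ hdx h12 s1 s2 h1 h2

private lemma aux_inner (dy dx l r u v : ℝ) (hdx : 0 < dx) (hlu : l ≤ u) (hvr : v ≤ r)
    (huv : u < v) (hends : 0 < (dy - l*dx)*(dy - r*dx))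
    (hin : (dy - u*dx)*(dy - v*dx) < 0) : False := by
  have hd1 : dy - v*dx < dy - u*dx := by nlinarith [mul_pos hdx (sub_pos.mpr huv)]
  have hv1 : dy - v*dx < 0 := by
    by_contra h'
    push_neg at h'
    nlinarith
  have hu1 : 0 < dy - u*dx := by
    by_contra h'
    push_neg at h'
    nlinarith
  have hl : 0 < dy - l*dx := by nlinarith [mul_nonneg hdx.le (sub_nonneg.mpr hlu)]
  have hr : dy - r*dx < 0 := by nlinarith [mul_nonneg hdx.le (sub_nonneg.mpr hvr)]
  nlinarith

lemma no_inner_change (dy dx l r u v : ℝ) (hlu : l ≤ u) (hvr : v ≤ r) (huv : u < v)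
    (hends : 0 < (dy - l*dx)*(dy - r*dx)) (hin : (dy - u*dx)*(dy - v*dx) < 0) : False := by
  rcases lt_trichotomy dx 0 with hdx | hdx | hdx
  · refine aux_inner (-dy) (-dx) l r u v (by linarith) hlu hvr huv ?_ ?_ <;> nlinarith
  · rw [hdx] at hin; nlinarith [sq_nonneg dy]
  · exact aux_inner dy dx l r u v hdx hlu hvr huv hends hin



lemma meets_iff (a b : ℝ) (p q : ℝ × ℝ) :
    ({z : ℝ × ℝ | ∃ u : ℝ, z = (u, a*u + b)} ∩ segment ℝ p q).Nonempty ↔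
      (p.2 - a*p.1 - b) * (q.2 - a*q.1 - b) ≤ 0 := by
  rw [← comb_iff]
  constructor
  · rintro ⟨z, ⟨u, rfl⟩, hz⟩
    rw [segment_eq_image] at hz
    obtain ⟨t, ⟨ht0, ht1⟩, hz⟩ := hz
    refine ⟨t, ht0, ht1, ?_⟩
    have h1 : (1-t)*p.1 + t*q.1 = u := congrArg Prod.fst hz
    have h2 : (1-t)*p.2 + t*q.2 = a*u + b := congrArg Prod.snd hz
    linear_combination h2 - a*h1
  · rintro ⟨t, ht0, ht1, ht⟩
    refine ⟨(1-t) • p + t • q, ⟨(1-t)*p.1 + t*q.1, ?_⟩, ?_⟩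
    · have : ((1-t) • p + t • q : ℝ × ℝ) = ((1-t)*p.1 + t*q.1, (1-t)*p.2 + t*q.2) := by
        simp [Prod.ext_iff, smul_eq_mul]
      rw [this, Prod.mk.injEq]
      exact ⟨rfl, by linear_combination ht⟩
    · rw [segment_eq_image]
      exact ⟨t, ⟨ht0, ht1⟩, rfl⟩

lemma vert_meets (x₀ : ℝ) (p q : ℝ × ℝ) (h : (p.1 - x₀) * (q.1 - x₀) ≤ 0) :
    ({z : ℝ × ℝ | ∃ v : ℝ, z = (x₀, v)} ∩ segment ℝ p q).Nonempty := by
  obtain ⟨t, ht0, ht1, ht⟩ := (comb_iff _ _).mpr h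
  refine ⟨(1-t) • p + t • q, ⟨(1-t)*p.2 + t*q.2, ?_⟩, ?_⟩
  · have : ((1-t) • p + t • q : ℝ × ℝ) = ((1-t)*p.1 + t*q.1, (1-t)*p.2 + t*q.2) := by
      simp [Prod.ext_iff, smul_eq_mul]
    rw [this, Prod.mk.injEq]
    exact ⟨by linarith [ht], rfl⟩
  · rw [segment_eq_image]
    exact ⟨t, ⟨ht0, ht1⟩, rfl⟩

theorem stmt_18 (n : ℕ) (x y : Fin n → ℝ × ℝ) (W : Set (ℝ × ℝ))
    (hW : W = {ab : ℝ × ℝ | ∀ i,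
      ({p : ℝ × ℝ | ∃ u : ℝ, p = (u, ab.1 * u + ab.2)} ∩ segment ℝ (x i) (y i)).Nonempty})
    (w : Fin (n + 1) → ℝ × ℝ) (hw : ∀ j, w j ∈ W)
    (hdist : ∀ j k, j ≠ k → w k ∉ connectedComponentIn W (w j)) :
    ∃ x₀ : ℝ, ∀ i,
      ({p : ℝ × ℝ | ∃ v : ℝ, p = (x₀, v)} ∩ segment ℝ (x i) (y i)).Nonempty := by
  rcases Nat.eq_zero_or_pos n with hn | hn
  · subst hn; exact ⟨0, fun i => i.elim0⟩
  -- membership as sign condition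
  have hmem : ∀ (j : Fin (n+1)) (i : Fin n),
      ((x i).2 - (w j).1*(x i).1 - (w j).2) * ((y i).2 - (w j).1*(y i).1 - (w j).2) ≤ 0 := by
    intro j i
    have h := hw j
    rw [hW] at h
    exact (meets_iff _ _ _ _).mp (h i)
  -- distinct components force a slope-sign change
  have step2 : ∀ j k : Fin (n+1), j ≠ k → ∃ i : Fin n,
      (((x i).2 - (y i).2) - (w j).1*((x i).1 - (y i).1)) *
      (((x i).2 - (y i).2) - (w k).1*((x i).1 - (y i).1)) < 0 := by
    intro j k hjk
    by_contra hcon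
    push_neg at hcon
    apply hdist j k hjk
    have hsub : segment ℝ (w j) (w k) ⊆ W := by
      intro z hz
      rw [segment_eq_image] at hz
      obtain ⟨s, ⟨hs0, hs1⟩, hz⟩ := hz
      rw [hW]
      intro i
      rw [meets_iff]
      have hz1 : z.1 = (1-s)*(w j).1 + s*(w k).1 := by rw [← hz]; simp [smul_eq_mul]
      have hz2 : z.2 = (1-s)*(w j).2 + s*(w k).2 := by rw [← hz]; simp [smul_eq_mul]
      rw [hz1, hz2]
      have hphi : (0:ℝ) ≤ (((x i).2 - (w j).1*(x i).1 - (w j).2) - ((y i).2 - (w j).1*(y i).1 - (w j).2))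
          * (((x i).2 - (w k).1*(x i).1 - (w k).2) - ((y i).2 - (w k).1*(y i).1 - (w k).2)) := by
        calc (0:ℝ) ≤ (((x i).2 - (y i).2) - (w j).1*((x i).1 - (y i).1)) *
            (((x i).2 - (y i).2) - (w k).1*((x i).1 - (y i).1)) := hcon i
          _ = _ := by ring
      have hk := key_lemma _ _ _ _ s (hmem j i) (hmem k i) hphi hs0 hs1
      calc ((x i).2 - ((1-s)*(w j).1 + s*(w k).1)*(x i).1 - ((1-s)*(w j).2 + s*(w k).2)) *
            ((y i).2 - ((1-s)*(w j).1 + s*(w k).1)*(y i).1 - ((1-s)*(w j).2 + s*(w k).2))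
          = ((1-s)*((x i).2 - (w j).1*(x i).1 - (w j).2) + s*((x i).2 - (w k).1*(x i).1 - (w k).2)) *
            ((1-s)*((y i).2 - (w j).1*(y i).1 - (w j).2) + s*((y i).2 - (w k).1*(y i).1 - (w k).2)) := by ring
        _ ≤ 0 := hk
    exact (convex_segment (w j) (w k)).isPreconnected.subset_connectedComponentIn
      (left_mem_segment ℝ _ _) hsub (right_mem_segment ℝ _ _)
  -- slopes are injective
  have hinj : Function.Injective (fun j => (w j).1) := by
    intro j k hjk
    by_contra hne
    obtain ⟨i, hi⟩ := step2 j k hne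
    simp only at hjk
    rw [hjk] at hi
    nlinarith [sq_nonneg (((x i).2 - (y i).2) - (w k).1*((x i).1 - (y i).1))]
  -- sorted slopes
  have hcard : (Finset.univ.image (fun j => (w j).1)).card = n + 1 := by
    rw [Finset.card_image_of_injective _ hinj, Finset.card_univ, Fintype.card_fin]
  set S := Finset.univ.image (fun j => (w j).1) with hS
  let E := S.orderIsoOfFin hcard
  set A : Fin (n+1) → ℝ := fun m => (E m : ℝ) with hA
  have hmono : StrictMono A := by
    intro m m' h
    exact_mod_cast E.strictMono h
  have hAmem : ∀ m, ∃ j, (w j).1 = A m := by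
    intro m
    have : (A m) ∈ S := (E m).2
    rw [hS, Finset.mem_image] at this
    obtain ⟨j, _, hj⟩ := this
    exact ⟨j, hj⟩
  have hlast : (0 : Fin (n+1)) < Fin.last n := by
    rw [Fin.lt_def]; simpa using hn
  obtain ⟨jm, hjm⟩ := hAmem 0
  obtain ⟨jM, hjM⟩ := hAmem (Fin.last n)
  set am := A 0 with ham'
  set aM := A (Fin.last n) with haM'
  have hamM : am < aM := hmono hlast
  -- the key sign fact at the extremes
  have hends : ∀ i : Fin n,
      (((x i).2 - (y i).2) - am*((x i).1 - (y i).1)) *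
      (((x i).2 - (y i).2) - aM*((x i).1 - (y i).1)) ≤ 0 := by
    intro i
    by_contra hcon
    push_neg at hcon
    -- choose a sign change in each gap
    have gap : ∀ k : Fin n, ∃ i' : Fin n,
        (((x i').2 - (y i').2) - (A k.castSucc)*((x i').1 - (y i').1)) *
        (((x i').2 - (y i').2) - (A k.succ)*((x i').1 - (y i').1)) < 0 := by
      intro k
      obtain ⟨j1, hj1⟩ := hAmem k.castSucc
      obtain ⟨j2, hj2⟩ := hAmem k.succ
      have hlt : A k.castSucc < A k.succ := hmono (Fin.castSucc_lt_succ : k.castSucc < k.succ)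
      have hne : j1 ≠ j2 := by
        intro h; rw [h, hj2] at hj1; exact absurd hj1 (ne_of_gt hlt)
      obtain ⟨i', hi'⟩ := step2 j1 j2 hne
      rw [hj1, hj2] at hi'
      exact ⟨i', hi'⟩
    choose I hI using gap
    have hsc : ∀ {k l : Fin n}, k < l → (k.succ : Fin (n+1)) ≤ l.castSucc := by
      intro k l h
      have h' := Fin.lt_def.mp h
      rw [Fin.le_def, Fin.val_succ, Fin.coe_castSucc]
      omega
    have hIinj : Function.Injective I := by
      intro k l hkl
      by_contra hne
      have hIl := hI l
      rw [← hkl] at hIl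
      rcases lt_or_gt_of_ne hne with h | h
      · exact no_two_sign_changes ((x (I k)).2 - (y (I k)).2) ((x (I k)).1 - (y (I k)).1)
          (A k.castSucc) (A k.succ) (A l.castSucc) (A l.succ)
          (hmono.monotone (hsc h)) (hI k) hIl
          (hmono (Fin.castSucc_lt_succ : k.castSucc < k.succ)) (hmono (Fin.castSucc_lt_succ : l.castSucc < l.succ))
      · exact no_two_sign_changes ((x (I k)).2 - (y (I k)).2) ((x (I k)).1 - (y (I k)).1)
          (A l.castSucc) (A l.succ) (A k.castSucc) (A k.succ)
          (hmono.monotone (hsc h)) hIl (hI k)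
          (hmono (Fin.castSucc_lt_succ : l.castSucc < l.succ)) (hmono (Fin.castSucc_lt_succ : k.castSucc < k.succ))
    have hsurj : Function.Surjective I := by
      have : Finite (Fin n) := inferInstance
      exact Finite.injective_iff_surjective.mp hIinj
    obtain ⟨k, hk⟩ := hsurj i
    have hin := hI k
    rw [hk] at hin
    exact no_inner_change ((x i).2 - (y i).2) ((x i).1 - (y i).1)
      am aM (A k.castSucc) (A k.succ)
      (hmono.monotone (Fin.zero_le _)) (hmono.monotone (Fin.le_last _))
      (hmono (Fin.castSucc_lt_succ : k.castSucc < k.succ)) hcon hin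
  -- conclusion: explicit vertical line
  set bm := (w jm).2 with hbm
  set bM := (w jM).2 with hbM
  refine ⟨(bm - bM)/(aM - am), fun i => vert_meets _ _ _ ?_⟩
  have hPm := hmem jm i
  have hPM := hmem jM i
  rw [hjm, ← hbm] at hPm
  rw [hjM, ← hbM] at hPM
  have hphi : (0:ℝ) ≤
      (((x i).2 - am*(x i).1 - bm) - ((y i).2 - am*(y i).1 - bm)) *
      ((-((x i).2 - aM*(x i).1 - bM)) - (-((y i).2 - aM*(y i).1 - bM))) := by
    have h := hends i
    nlinarith [h]
  have hCD : (-((x i).2 - aM*(x i).1 - bM)) * (-((y i).2 - aM*(y i).1 - bM)) ≤ 0 := by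
    nlinarith [hPM]
  have hkey := key_lemma ((x i).2 - am*(x i).1 - bm) ((y i).2 - am*(y i).1 - bm)
    (-((x i).2 - aM*(x i).1 - bM)) (-((y i).2 - aM*(y i).1 - bM)) (1/2)
    hPm hCD hphi (by norm_num) (by norm_num)
  have hane : aM - am ≠ 0 := by linarith
  have heq : ((1-(1/2:ℝ))*((x i).2 - am*(x i).1 - bm) + (1/2)*(-((x i).2 - aM*(x i).1 - bM))) *
      ((1-(1/2:ℝ))*((y i).2 - am*(y i).1 - bm) + (1/2)*(-((y i).2 - aM*(y i).1 - bM)))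
      = ((aM - am)^2/4) * (((x i).1 - (bm - bM)/(aM - am)) * ((y i).1 - (bm - bM)/(aM - am))) := by
    field_simp
    ring
  rw [heq] at hkey
  have hc : 0 < (aM - am)^2/4 := by positivity
  rcases mul_nonpos_iff.mp hkey with ⟨h1, h2⟩ | ⟨h1, h2⟩
  · exact h2
  · linarith
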